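/- For the free Laplacian on the infinite star graph (a center $0$ joined to $N$ copies of $\mathbb{N}$): the function $\Psi = s + \mathbf{1}^{(1)}+\cdots+\mathbf{1}^{(N)}$ (the constant function $1$ on the whole graph) satisfies $-\Delta_G\Psi=0$, and any bounded solution of $-\Delta_G\Psi=0$ decaying to $0$ along every ray must be identically zero; in particular the Laplacian on the infinite star graph has no zero bound states (zero is an exceptional point of the first kind with one-dimensional resonance space spanned by the constant function). -/
import Mathlib


open Filter

/-- The graph Laplacian `-Δ_G` on the infinite star graph with center `Sum.inl ()` and
`N` rays; `Sum.inr (α, n)` is the `(n+1)`-st vertex of ray `α`. -/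
noncomputable def starLap (N : ℕ) (Ψ : Unit ⊕ Fin N × ℕ → ℂ) : Unit ⊕ Fin N × ℕ → ℂ
  | Sum.inl _ => (N : ℂ) * Ψ (Sum.inl ()) - ∑ α : Fin N, Ψ (Sum.inr (α, 0))
  | Sum.inr (α, 0) => 2 * Ψ (Sum.inr (α, 0)) - Ψ (Sum.inr (α, 1)) - Ψ (Sum.inl ())
  | Sum.inr (α, n + 1) =>
      2 * Ψ (Sum.inr (α, n + 1)) - Ψ (Sum.inr (α, n + 2)) - Ψ (Sum.inr (α, n))

/-- On the infinite star graph, the constant function `1` is harmonic, and every bounded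
harmonic function tending to `0` along every ray vanishes identically: the Laplacian on the
infinite star graph has no zero bound states. -/
theorem starLap_const_harmonic_and_no_bound_states (N : ℕ) (hN : 1 ≤ N) :
    (∀ x, starLap N (fun _ => (1 : ℂ)) x = 0) ∧
      ∀ Ψ : Unit ⊕ Fin N × ℕ → ℂ, (∀ x, starLap N Ψ x = 0) →
        (∃ C : ℝ, ∀ x, ‖Ψ x‖ ≤ C) →
        (∀ α : Fin N, Tendsto (fun n : ℕ => Ψ (Sum.inr (α, n))) atTop (nhds 0)) →
        Ψ = 0 := by
  constructor
  · intro x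
    match x with
    | Sum.inl _ => simp [starLap]
    | Sum.inr (α, 0) => simp [starLap]; ring
    | Sum.inr (α, n+1) => simp [starLap]; ring
  · intro Ψ hharm _ hdecay
    have key : ∀ α : Fin N, ∀ n : ℕ, Ψ (Sum.inr (α, n)) =
        Ψ (Sum.inl ()) + ((n : ℂ) + 1) * (Ψ (Sum.inr (α, 0)) - Ψ (Sum.inl ())) := by
      intro α n
      induction n using Nat.strong_induction_on with
      | _ n ih =>
        match n with
        | 0 => push_cast; ring
        | 1 =>
          have h0 := hharm (Sum.inr (α, 0))
          simp only [starLap] at h0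
          push_cast
          linear_combination -h0
        | n + 2 =>
          have h := hharm (Sum.inr (α, n + 1))
          simp only [starLap] at h
          have i1 := ih (n + 1) (by omega)
          have i0 := ih n (by omega)
          push_cast at i1 i0 ⊢
          linear_combination -h + 2 * i1 - i0
    -- slope is zero for every ray
    have hslope : ∀ α : Fin N, Ψ (Sum.inr (α, 0)) = Ψ (Sum.inl ()) := by
      intro α
      have h1 : Tendsto (fun n : ℕ => Ψ (Sum.inr (α, n + 1)) - Ψ (Sum.inr (α, n)))
          atTop (nhds 0) := by
        have := ((hdecay α).comp (tendsto_add_atTop_nat 1)).sub (hdecay α)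
        simpa using this
      have h2 : (fun n : ℕ => Ψ (Sum.inr (α, n + 1)) - Ψ (Sum.inr (α, n)))
          = fun _ => Ψ (Sum.inr (α, 0)) - Ψ (Sum.inl ()) := by
        funext n
        rw [key α (n + 1), key α n]
        push_cast; ring
      rw [h2] at h1
      have := tendsto_nhds_unique h1 tendsto_const_nhds
      exact sub_eq_zero.mp this.symm
    -- the center value is zero
    have hc : Ψ (Sum.inl ()) = 0 := by
      set α0 : Fin N := ⟨0, hN⟩
      have h2 : (fun n : ℕ => Ψ (Sum.inr (α0, n))) = fun _ => Ψ (Sum.inl ()) := by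
        funext n
        rw [key α0 n, hslope α0]
        ring
      have := hdecay α0
      rw [h2] at this
      exact tendsto_nhds_unique tendsto_const_nhds this
    funext x
    match x with
    | Sum.inl _ => simpa using hc
    | Sum.inr (α, n) =>
      simp only [Pi.zero_apply]
      rw [key α n, hslope α, hc]
      ring
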